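/- Let K be a difference subfield of U with σ(K) = K, and let a, b be finite tuples from U with σ(a) ∈ K(a)^alg, σ(b) ∈ K(b)^alg, and b ∈ K(a)^alg (every coordinate of b is algebraic over K(a)). Then dd(b/K) ≤ dd(a/K). -/

import Mathlib

/- Setting: a large algebraically closed field `U` with an automorphism `σ`.
   Tuples are maps `Fin n → U`; for a tuple `t`, the relevant set of coordinates
   is `Set.range t`.  `fAdj E s` is the subfield `E(s)` generated by a subfield
   `E` and a set `s`, and `deg E s` is the degree `μ(s/E) = [E(s):E]`. -/

set_option maxHeartbeats 1000000
set_option synthInstance.maxHeartbeats 1000000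

open Filter Set

variable {U : Type*}

/-- The subfield `E(s)` generated by the subfield `E` and the set `s`. -/
noncomputable def fAdj [Field U] (E : Subfield U) (s : Set U) : Subfield U :=
  (IntermediateField.adjoin E s).toSubfield

/-- The degree `μ(s/E) = [E(s):E]` (as `Module.finrank`; it is `0` when infinite). -/
noncomputable def deg [Field U] (E : Subfield U) (s : Set U) : ℕ :=
  Module.finrank E (IntermediateField.adjoin E s)

/-- `k ↦ μ(σ^{k+1}(s) / K(s, σ(s), …, σ^k(s)))`: the sequence whose eventual
value is the limit degree `ld(s/K)`. -/
noncomputable def ldSeq [Field U] (σ : U ≃+* U) (K : Subfield U) (s : Set U) (k : ℕ) : ℕ :=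
  deg (fAdj K (⋃ i ∈ Set.Iic k, ⇑(σ ^ i) '' s)) (⇑(σ ^ (k + 1)) '' s)

/-- `k ↦ μ(σ^k(s) / K(s))`: the sequence whose `k`-th roots converge to the
distant degree `dd(s/K)`. -/
noncomputable def ddSeq [Field U] (σ : U ≃+* U) (K : Subfield U) (s : Set U) (k : ℕ) : ℕ :=
  deg (fAdj K s) (⇑(σ ^ k) '' s)

/-- The inversive closure `K^inv = ⋃ₙ σ^{-n}(K)`. -/
noncomputable def Kinv [Field U] (σ : U ≃+* U) (K : Subfield U) : Subfield U :=
  ⨆ n : ℕ, K.map (σ⁻¹ ^ n : U ≃+* U).toRingHom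

/-- The difference field `K(s)_σ = K(σ^i(s) : i ∈ ℕ)` generated by `s` over `K`. -/
noncomputable def diffAdj [Field U] (σ : U ≃+* U) (K : Subfield U) (s : Set U) : Subfield U :=
  fAdj K (⋃ i : ℕ, ⇑(σ ^ i) '' s)

section Infra

variable [Field U]

lemma fAdj_eq_closure (E : Subfield U) (s : Set U) :
    fAdj E s = Subfield.closure (↑E ∪ s) := by
  have : Set.range (algebraMap E U) = (E : Set U) := Subtype.range_coe
  simp only [fAdj, IntermediateField.adjoin]
  ext x
  constructor
  · intro hx; rw [← this]; exact hx
  · intro hx; show x ∈ Subfield.closure (Set.range (algebraMap E U) ∪ s); rwa [this]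

lemma le_fAdj (E : Subfield U) (s : Set U) : E ≤ fAdj E s := by
  rw [fAdj_eq_closure]
  exact fun x hx => Subfield.subset_closure (Or.inl hx)

lemma subset_fAdj (E : Subfield U) (s : Set U) : s ⊆ ↑(fAdj E s) := by
  rw [fAdj_eq_closure]
  exact fun x hx => Subfield.subset_closure (Or.inr hx)

lemma fAdj_le {E F : Subfield U} {s : Set U} (hEF : E ≤ F) (hs : s ⊆ ↑F) :
    fAdj E s ≤ F := by
  rw [fAdj_eq_closure]
  exact Subfield.closure_le.2 (Set.union_subset hEF hs)

lemma fAdj_mono_left {E F : Subfield U} (s : Set U) (h : E ≤ F) : fAdj E s ≤ fAdj F s :=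
  fAdj_le (h.trans (le_fAdj F s)) (subset_fAdj F s)

lemma fAdj_mono_right (E : Subfield U) {s t : Set U} (h : s ⊆ t) : fAdj E s ≤ fAdj E t :=
  fAdj_le (le_fAdj E t) (h.trans (subset_fAdj E t))

lemma fAdj_fAdj (E : Subfield U) (s t : Set U) :
    fAdj (fAdj E s) t = fAdj E (s ∪ t) := by
  apply le_antisymm
  · exact fAdj_le (fAdj_le (le_fAdj _ _) ((Set.subset_union_left).trans (subset_fAdj _ _)))
      ((Set.subset_union_right).trans (subset_fAdj _ _))
  · exact fAdj_le (le_fAdj E s |>.trans (le_fAdj _ _))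
      (Set.union_subset ((subset_fAdj E s).trans (le_fAdj _ t)) (subset_fAdj _ t))

lemma fAdj_empty (E : Subfield U) : fAdj E ∅ = E :=
  le_antisymm (fAdj_le le_rfl (Set.empty_subset _)) (le_fAdj E ∅)

lemma Subfield.map_closure' (f : U →+* U) (X : Set U) :
    (Subfield.closure X).map f = Subfield.closure (f '' X) := by
  apply le_antisymm
  · rw [Subfield.map_le_iff_le_comap]
    apply Subfield.closure_le.2
    intro x hx
    exact Subfield.subset_closure ⟨x, hx, rfl⟩
  · apply Subfield.closure_le.2
    rintro _ ⟨x, hx, rfl⟩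
    exact ⟨x, Subfield.subset_closure hx, rfl⟩

lemma fAdj_map (f : U →+* U) (E : Subfield U) (s : Set U) :
    (fAdj E s).map f = fAdj (E.map f) (f '' s) := by
  rw [fAdj_eq_closure, fAdj_eq_closure, Subfield.map_closure', Set.image_union,
    Subfield.coe_map]

lemma deg_eq (E : Subfield U) (s : Set U) :
    deg E s = Subfield.relfinrank E (fAdj E s) := by
  rw [Subfield.relfinrank_eq_finrank_of_le (le_fAdj E s)]
  have h : Subfield.extendScalars (le_fAdj E s) = IntermediateField.adjoin E s :=
    SetLike.ext' rfl
  rw [h]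
  rfl

lemma isAlgebraic_of_mem {E : Subfield U} {x : U} (hx : x ∈ E) : IsAlgebraic E x := by
  have := isAlgebraic_algebraMap (R := E) (A := U) ⟨x, hx⟩
  exact this

lemma isAlgebraic_mono {E F : Subfield U} (h : E ≤ F) {x : U}
    (hx : IsAlgebraic E x) : IsAlgebraic F x := by
  obtain ⟨p, hp0, hpe⟩ := hx
  refine ⟨p.map (Subfield.inclusion h), ?_, ?_⟩
  · exact (Polynomial.map_ne_zero_iff (Subfield.inclusion h).injective).2 hp0
  · rw [Polynomial.aeval_def, Polynomial.eval₂_map]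
    have hc : (algebraMap F U).comp (Subfield.inclusion h) = algebraMap E U := by
      ext y; rfl
    rw [hc]
    exact hpe

lemma deg_pos {E : Subfield U} {T : Set U} (hfin : T.Finite) (hT : ∀ x ∈ T, IsAlgebraic E x) :
    0 < deg E T := by
  haveI : Finite T := hfin
  haveI : FiniteDimensional E (IntermediateField.adjoin E T) :=
    IntermediateField.finiteDimensional_adjoin (fun x hx => (hT x hx).isIntegral)
  exact Module.finrank_pos

lemma isAlgebraic_trans_fAdj {E : Subfield U} {T : Set U} (hfin : T.Finite)
    (hT : ∀ x ∈ T, IsAlgebraic E x) {x : U} (hx : IsAlgebraic (fAdj E T) x) :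
    IsAlgebraic E x := by
  haveI : Finite T := hfin
  haveI : FiniteDimensional E (IntermediateField.adjoin E T) :=
    IntermediateField.finiteDimensional_adjoin (fun x hx => (hT x hx).isIntegral)
  haveI : Algebra.IsIntegral E (IntermediateField.adjoin E T) :=
    Algebra.IsIntegral.of_finite _ _
  have hx' : IsIntegral (IntermediateField.adjoin E T) x := hx.isIntegral
  exact (isIntegral_trans (A := IntermediateField.adjoin E T) x hx').isAlgebraic

lemma relfinrank_le_of_le {B C C' : Subfield U} (h1 : B ≤ C) (h2 : C ≤ C')
    (hpos : 0 < Subfield.relfinrank B C') :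
    Subfield.relfinrank B C ≤ Subfield.relfinrank B C' :=
  Nat.le_of_dvd hpos ⟨_, (Subfield.relfinrank_mul_relfinrank h1 h2).symm⟩

lemma deg_mono_right {E : Subfield U} {s t : Set U} (hst : s ⊆ t) (hfin : t.Finite)
    (hT : ∀ x ∈ t, IsAlgebraic E x) : deg E s ≤ deg E t := by
  rw [deg_eq, deg_eq]
  refine relfinrank_le_of_le (le_fAdj E s) (fAdj_mono_right E hst) ?_
  rw [← deg_eq]
  exact deg_pos hfin hT

lemma isAlgebraic_map {E : Subfield U} {x : U} (f : U ≃+* U) (hx : IsAlgebraic E x) :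
    IsAlgebraic (E.map (f : U →+* U)) (f x) := by
  obtain ⟨p, hp0, hpe⟩ := hx
  let e : E →+* (E.map (f : U →+* U)) :=
    ((f : U →+* U).restrict E (E.map (f : U →+* U)) (fun x hx => ⟨x, hx, rfl⟩))
  refine ⟨p.map e, ?_, ?_⟩
  · refine (Polynomial.map_ne_zero_iff ?_).2 hp0
    intro y z hyz
    ext
    exact f.injective (congrArg Subtype.val hyz)
  · rw [Polynomial.aeval_def, Polynomial.eval₂_map]
    have hc : (algebraMap (E.map (f : U →+* U)) U).comp e
        = (f : U →+* U).comp (algebraMap E U) := by ext y; rfl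
    rw [hc]
    have h2 := Polynomial.hom_eval₂ (f := algebraMap (E : Subfield U) U)
      (g := (f : U →+* U)) (p := p) x
    rw [Polynomial.aeval_def] at hpe
    show Polynomial.eval₂ ((f : U →+* U).comp (algebraMap (E : Subfield U) U))
      ((f : U →+* U) x) p = 0
    rw [← h2, hpe, map_zero]

lemma deg_empty (E : Subfield U) : deg E ∅ = 1 := by
  rw [deg_eq, fAdj_empty, Subfield.relfinrank_self]

lemma deg_union (E : Subfield U) (s t : Set U) :
    deg E (s ∪ t) = deg E s * deg (fAdj E s) t := by
  rw [deg_eq, deg_eq, deg_eq, ← fAdj_fAdj]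
  exact (Subfield.relfinrank_mul_relfinrank (le_fAdj E s) (le_fAdj (fAdj E s) t)).symm

lemma deg_singleton {E : Subfield U} {t : U} (ht : IsAlgebraic E t) :
    deg E {t} = (minpoly E t).natDegree := by
  have := IntermediateField.adjoin.finrank (K := E) (L := U) ht.isIntegral
  rw [deg]
  convert this using 2

lemma deg_singleton_le {E F : Subfield U} (h : E ≤ F) {t : U} (ht : IsAlgebraic E t) :
    deg F {t} ≤ deg E {t} := by
  have htF : IsAlgebraic F t := isAlgebraic_mono h ht
  rw [deg_singleton ht, deg_singleton htF]
  have hdvd : minpoly F t ∣ (minpoly E t).map (Subfield.inclusion h) := by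
    apply minpoly.dvd
    rw [Polynomial.aeval_def, Polynomial.eval₂_map]
    have hc : (algebraMap F U).comp (Subfield.inclusion h) = algebraMap E U := by
      ext y; rfl
    rw [hc]
    exact minpoly.aeval E t
  have hne : (minpoly E t).map (Subfield.inclusion h) ≠ 0 :=
    (Polynomial.map_ne_zero_iff (Subfield.inclusion h).injective).2
      (minpoly.ne_zero ht.isIntegral)
  have := Polynomial.natDegree_le_of_dvd hdvd hne
  rwa [Polynomial.natDegree_map] at this

lemma deg_range_le : ∀ (m : ℕ) (c : Fin m → U) (E F : Subfield U), E ≤ F →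
    (∀ i, IsAlgebraic E (c i)) → deg F (Set.range c) ≤ deg E (Set.range c) := by
  intro m
  induction m with
  | zero =>
    intro c E F _ _
    rw [Set.range_eq_empty c, deg_empty, deg_empty]
  | succ m ih =>
    intro c E F hEF halg
    have hc : Set.range c = {c 0} ∪ Set.range (Fin.tail c) := by
      rw [← Fin.cons_self_tail c, Fin.range_cons, Set.insert_eq, Fin.tail_cons]
      simp [Fin.cons_zero]
    rw [hc, deg_union, deg_union]
    refine Nat.mul_le_mul (deg_singleton_le hEF (halg 0)) ?_
    exact ih (Fin.tail c) (fAdj E {c 0}) (fAdj F {c 0})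
      (fAdj_mono_left _ hEF)
      (fun i => isAlgebraic_mono (le_fAdj E {c 0}) (halg i.succ))

lemma deg_map_eq (f : U ≃+* U) (E : Subfield U) (s : Set U) :
    deg (E.map (f : U →+* U)) (f '' s) = deg E s := by
  have himg : f '' s = ⇑(f : U →+* U) '' s := rfl
  rw [himg, deg_eq, deg_eq, ← fAdj_map]
  exact Subfield.relfinrank_map_map E (fAdj E s) (f : U →+* U)

end Infra

section Hard

variable [Field U]

lemma deg_le_deg_fAdj_transcendental {F : Subfield U} {y : U} (hy : Transcendental F y)
    {T : Set U} (hfin : T.Finite) (hT : ∀ x ∈ T, IsAlgebraic F x) :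
    deg F T ≤ deg (fAdj F {y}) T := by
  classical
  set F' : Subfield U := fAdj F {y} with hF'
  haveI : Finite T := hfin
  set X := IntermediateField.adjoin (F : Subfield U) T with hX
  haveI hFD : FiniteDimensional F X :=
    IntermediateField.finiteDimensional_adjoin (fun x hx => (hT x hx).isIntegral)
  haveI hFD' : FiniteDimensional F' (IntermediateField.adjoin F' T) :=
    IntermediateField.finiteDimensional_adjoin
      (fun x hx => ((isAlgebraic_mono (le_fAdj F {y}) (hT x hx)).isIntegral))
  set n := Module.finrank F X with hn
  let v : Module.Basis (Fin n) F X := Module.finBasis F X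
  have hmem : ∀ i : Fin n, ((v i : U)) ∈ IntermediateField.adjoin F' T := by
    intro i
    have h1 : ((v i : U)) ∈ fAdj F T := (v i).2
    exact fAdj_mono_left T (le_fAdj F {y}) h1
  let w : Fin n → ↥(IntermediateField.adjoin F' T) := fun i => ⟨(v i : U), hmem i⟩
  have hyT : Transcendental X y := by
    intro halg
    exact hy (isAlgebraic_trans_fAdj hfin hT halg)
  have hw : LinearIndependent F' w := by
    rw [Fintype.linearIndependent_iff]
    intro g hg
    have hU : ∑ i, (g i : U) * (v i : U) = 0 := by
      have h0 := congrArg (Subtype.val) hg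
      rw [AddSubmonoidClass.coe_finset_sum] at h0
      have h1 : ∑ x, (algebraMap F' U) (g x) * (v x : U) = 0 := by
        simpa [w, Algebra.smul_def] using h0
      exact h1
    have hrep : ∀ i, ∃ rp sp : Polynomial F,
        Polynomial.aeval y sp ≠ 0 ∧ (g i : U) * Polynomial.aeval y sp
          = Polynomial.aeval y rp := by
      intro i
      obtain ⟨rp, sp, hrs⟩ := (IntermediateField.mem_adjoin_simple_iff F ((g i : U))).1 (g i).2
      by_cases hs : (Polynomial.aeval y) sp = 0
      · refine ⟨0, 1, by simp, ?_⟩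
        rw [hrs, hs, div_zero]
        simp
      · exact ⟨rp, sp, hs, by rw [hrs, div_mul_cancel₀ _ hs]⟩
    choose rp sp hsp hgs using hrep
    set Qd : Fin n → Polynomial F := fun i => (Finset.univ.erase i).prod sp with hQd
    have hrel : ∑ i, (Polynomial.aeval y (rp i * Qd i)) * (v i : U) = 0 := by
      have : ∀ i : Fin n, (Polynomial.aeval y (rp i * Qd i)) * (v i : U)
          = (Polynomial.aeval y (Finset.univ.prod sp)) * ((g i : U) * (v i : U)) := by
        intro i
        rw [map_mul, ← hgs i, ← Finset.mul_prod_erase Finset.univ sp (Finset.mem_univ i),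
          map_mul]
        ring
      rw [Finset.sum_congr rfl (fun i _ => this i), ← Finset.mul_sum, hU, mul_zero]
    set P : Polynomial X :=
      ∑ i, ((rp i * Qd i).map (algebraMap F X)) * Polynomial.C (v i) with hP
    have hPy : Polynomial.aeval y P = 0 := by
      rw [hP, map_sum]
      have : ∀ i : Fin n, Polynomial.aeval y (((rp i * Qd i).map (algebraMap F X))
          * Polynomial.C (v i)) = (Polynomial.aeval y (rp i * Qd i)) * (v i : U) := by
        intro i
        rw [map_mul, Polynomial.aeval_C, Polynomial.aeval_map_algebraMap]
        rfl
      rw [Finset.sum_congr rfl (fun i _ => this i), hrel]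
    have hP0 : P = 0 := (transcendental_iff.1 hyT) P hPy
    have hcoeff : ∀ i, rp i * Qd i = 0 := by
      intro i
      ext mi
      have h1 : P.coeff mi = 0 := by rw [hP0]; simp
      rw [hP, Polynomial.finset_sum_coeff] at h1
      have h2 : ∀ j : Fin n, (((rp j * Qd j).map (algebraMap F X))
          * Polynomial.C (v j)).coeff mi
          = ((rp j * Qd j).coeff mi) • (v j) := by
        intro j
        rw [Polynomial.coeff_mul_C, Polynomial.coeff_map, Algebra.smul_def]
      rw [Finset.sum_congr rfl (fun j _ => h2 j)] at h1
      have h3 := (Fintype.linearIndependent_iff.1 v.linearIndependent) _ h1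
      simpa using h3 i
    intro i
    have hQdne : Qd i ≠ 0 := by
      rw [hQd]
      apply Finset.prod_ne_zero_iff.2
      intro j _ h0
      exact hsp j (by rw [h0, map_zero])
    have hrpz : rp i = 0 := by
      rcases mul_eq_zero.1 (hcoeff i) with h | h
      · exact h
      · exact absurd h hQdne
    have hz : (g i : U) * Polynomial.aeval y (sp i) = 0 := by
      rw [hgs i, hrpz, map_zero]
    have hgz : (g i : U) = 0 := by
      rcases mul_eq_zero.1 hz with h | h
      · exact h
      · exact absurd h (hsp i)
    exact Subtype.ext hgz
  have hcard := hw.fintype_card_le_finrank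
  have h' : Module.finrank F X ≤ Module.finrank F' (IntermediateField.adjoin F' T) := by
    simpa [hn] using hcard
  exact h'

/-- Descent: adjoining a finite tuple to the base enlarges the degree of any finite
algebraic set only up to a fixed multiplicative constant. -/
lemma descent : ∀ (r : ℕ) (c : Fin r → U) (F : Subfield U),
    ∃ C : ℕ, 0 < C ∧ ∀ T : Set U, T.Finite → (∀ x ∈ T, IsAlgebraic F x) →
      deg F T ≤ C * deg (fAdj F (Set.range c)) T := by
  intro r
  induction r with
  | zero =>
    intro c F
    refine ⟨1, Nat.one_pos, fun T _ _ => ?_⟩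
    rw [Set.range_eq_empty c, fAdj_empty, one_mul]
  | succ r ih =>
    intro c F
    set y := c 0 with hy
    set F' : Subfield U := fAdj F {y} with hF'
    obtain ⟨C', hC', hIH⟩ := ih (Fin.tail c) F'
    have hrange : Set.range c = {y} ∪ Set.range (Fin.tail c) := by
      rw [← Fin.cons_self_tail c, Fin.range_cons, Set.insert_eq, Fin.tail_cons]
    have hFF : fAdj F' (Set.range (Fin.tail c)) = fAdj F (Set.range c) := by
      rw [hF', fAdj_fAdj, ← hrange]
    by_cases halg : IsAlgebraic F y
    · refine ⟨deg F {y} * C', Nat.mul_pos (deg_pos (Set.finite_singleton y)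
        (by rintro x rfl; exact halg)) hC', ?_⟩
      intro T hfin hT
      have h1 : deg F T ≤ deg F ({y} ∪ T) := by
        refine deg_mono_right (Set.subset_union_right) ((Set.finite_singleton y).union hfin) ?_
        rintro x (rfl | hx)
        · exact halg
        · exact hT x hx
      have h2 : deg F ({y} ∪ T) = deg F {y} * deg F' T := deg_union F {y} T
      have h3 : deg F' T ≤ C' * deg (fAdj F (Set.range c)) T := by
        rw [← hFF]
        exact hIH T hfin (fun x hx => isAlgebraic_mono (le_fAdj F {y}) (hT x hx))
      calc deg F T ≤ deg F {y} * deg F' T := h2 ▸ h1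
        _ ≤ deg F {y} * (C' * deg (fAdj F (Set.range c)) T) :=
            Nat.mul_le_mul_left _ h3
        _ = deg F {y} * C' * deg (fAdj F (Set.range c)) T := by ring
    · refine ⟨C', hC', ?_⟩
      intro T hfin hT
      have h1 : deg F T ≤ deg F' T := deg_le_deg_fAdj_transcendental halg hfin hT
      have h2 : deg F' T ≤ C' * deg (fAdj F (Set.range c)) T := by
        rw [← hFF]
        exact hIH T hfin (fun x hx => isAlgebraic_mono (le_fAdj F {y}) (hT x hx))
      exact h1.trans h2

end Hard

section Chain

variable [Field U]

lemma coe_pow_succ (σ : U ≃+* U) (k : ℕ) (x : U) : (σ ^ (k + 1)) x = (σ ^ k) (σ x) := by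
  rw [pow_succ]
  rfl

lemma map_pow_eq {σ : U ≃+* U} {K : Subfield U} (hK : K.map σ.toRingHom = K) :
    ∀ k : ℕ, K.map ((σ ^ k : U ≃+* U) : U →+* U) = K := by
  intro k
  induction k with
  | zero =>
    rw [pow_zero]
    ext x
    constructor
    · rintro ⟨y, hy, rfl⟩; exact hy
    · intro hx; exact ⟨x, hx, rfl⟩
  | succ k ihk =>
    rw [pow_succ]
    have hcomp : ((σ ^ k * σ : U ≃+* U) : U →+* U)
        = ((σ ^ k : U ≃+* U) : U →+* U).comp (σ : U →+* U) := by
      ext x; rfl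
    rw [hcomp, ← Subfield.map_map]
    have : K.map (σ : U →+* U) = K := hK
    rw [this, ihk]

lemma alg_chain {σ : U ≃+* U} {K : Subfield U} (hK : K.map σ.toRingHom = K)
    {m : ℕ} (b : Fin m → U) (hb : ∀ j, IsAlgebraic (fAdj K (Set.range b)) (σ (b j))) :
    ∀ (k : ℕ) (j : Fin m), IsAlgebraic (fAdj K (Set.range b)) ((σ ^ k) (b j)) := by
  intro k
  induction k with
  | zero =>
    intro j
    rw [pow_zero]
    exact isAlgebraic_of_mem (subset_fAdj K _ (Set.mem_range_self j))
  | succ k ihk =>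
    intro j
    have h2 := isAlgebraic_map (σ ^ k) (hb j)
    rw [show (σ ^ k) (σ (b j)) = (σ ^ (k + 1)) (b j) from (coe_pow_succ σ k (b j)).symm] at h2
    have hEmap : (fAdj K (Set.range b)).map ((σ ^ k : U ≃+* U) : U →+* U)
        = fAdj K (Set.range (⇑(σ ^ k : U ≃+* U) ∘ b)) := by
      rw [fAdj_map, map_pow_eq hK k, Set.range_comp]
      rfl
    rw [hEmap] at h2
    have h5 := isAlgebraic_mono
      (fAdj_mono_left (Set.range (⇑(σ ^ k : U ≃+* U) ∘ b)) (le_fAdj K (Set.range b))) h2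
    apply isAlgebraic_trans_fAdj (Set.finite_range _) ?_ h5
    rintro x ⟨i, rfl⟩
    exact ihk i

end Chain

/-- if `b ∈ K(a)^alg` then `dd(b/K) ≤ dd(a/K)`. -/
theorem stmt17 [Field U] [IsAlgClosed U] (σ : U ≃+* U) (K : Subfield U)
    (hK : K.map σ.toRingHom = K) {n m : ℕ} (a : Fin n → U) (b : Fin m → U)
    (ha : ∀ i, IsAlgebraic (fAdj K (Set.range a)) (σ (a i)))
    (hb : ∀ j, IsAlgebraic (fAdj K (Set.range b)) (σ (b j)))
    (hba : ∀ j, IsAlgebraic (fAdj K (Set.range a)) (b j))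
    (Da Db : ℝ)
    (hDa : Tendsto (fun k => (ddSeq σ K (Set.range a) k : ℝ) ^ (1 / (k : ℝ)))
      atTop (nhds Da))
    (hDb : Tendsto (fun k => (ddSeq σ K (Set.range b) k : ℝ) ^ (1 / (k : ℝ)))
      atTop (nhds Db)) :
    Db ≤ Da := by
  classical
  set Sa := Set.range a with hSa
  set Sb := Set.range b with hSb
  set A := fAdj K Sa with hA
  set E := fAdj K Sb with hE
  set B := fAdj E Sa with hB
  obtain ⟨C, hCpos, hC⟩ := descent n a E
  have hba' : ∀ x ∈ Sb, IsAlgebraic A x := by rintro x ⟨j, rfl⟩; exact hba j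
  set d := deg A Sb with hd
  have hdpos : 0 < d := deg_pos (Set.finite_range b) hba'
  have Hb : ∀ (k : ℕ) (j : Fin m), IsAlgebraic E ((σ ^ k) (b j)) := alg_chain hK b hb
  have Ha : ∀ (k : ℕ) (i : Fin n), IsAlgebraic A ((σ ^ k) (a i)) := alg_chain hK a ha
  have hKE : K ≤ E := le_fAdj K Sb
  have hAB : A ≤ B := fAdj_mono_left Sa hKE
  have hEB : E ≤ B := le_fAdj E Sa
  -- the key uniform bound
  have key : ∀ k : ℕ, ddSeq σ K Sb k ≤ (C * d) * ddSeq σ K Sa k := by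
    intro k
    set τ : U ≃+* U := σ ^ k with hτ
    set Ta : Set U := ⇑τ '' Sa with hTa
    set Tb : Set U := ⇑τ '' Sb with hTb
    have hTa_fin : Ta.Finite := (Set.finite_range a).image _
    have hTb_fin : Tb.Finite := (Set.finite_range b).image _
    have hTa_alg : ∀ x ∈ Ta, IsAlgebraic A x := by
      rintro x ⟨t, ⟨i, rfl⟩, rfl⟩; exact Ha k i
    have hTb_alg : ∀ x ∈ Tb, IsAlgebraic E x := by
      rintro x ⟨t, ⟨j, rfl⟩, rfl⟩; exact Hb k j
    have s1 : deg E Tb ≤ C * deg B Tb := hC Tb hTb_fin hTb_alg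
    have hunion_alg : ∀ x ∈ Ta ∪ Tb, IsAlgebraic B x := by
      rintro x (hx | hx)
      · exact isAlgebraic_mono hAB (hTa_alg x hx)
      · exact isAlgebraic_mono hEB (hTb_alg x hx)
    have s2 : deg B Tb ≤ deg B (Ta ∪ Tb) :=
      deg_mono_right Set.subset_union_right (hTa_fin.union hTb_fin) hunion_alg
    have s3 : deg B (Ta ∪ Tb) = deg B Ta * deg (fAdj B Ta) Tb := deg_union B Ta Tb
    have s4 : deg B Ta ≤ deg A Ta := by
      have hTa' : Ta = Set.range (⇑τ ∘ a) := by rw [Set.range_comp]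
      rw [hTa']
      exact deg_range_le n (⇑τ ∘ a) A B hAB (fun i => Ha k i)
    have hmapA : A.map (τ : U →+* U) = fAdj K Ta := by
      rw [hA, fAdj_map, map_pow_eq hK k]
      rfl
    have hbak : ∀ j : Fin m, IsAlgebraic (fAdj K Ta) (τ (b j)) := by
      intro j
      have h0 := isAlgebraic_map τ (hba j)
      rwa [hmapA] at h0
    have s5 : deg (fAdj B Ta) Tb ≤ deg (fAdj K Ta) Tb := by
      have hTb' : Tb = Set.range (⇑τ ∘ b) := by rw [Set.range_comp]
      rw [hTb']
      refine deg_range_le m (⇑τ ∘ b) (fAdj K Ta) (fAdj B Ta) ?_ (fun j => hbak j)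
      exact fAdj_mono_left Ta (hKE.trans hEB)
    have s6 : deg (fAdj K Ta) Tb = d := by
      rw [← hmapA, hTb, hSb]
      have := deg_map_eq τ A Sb
      rw [hSb] at this
      exact this
    have hchain : ddSeq σ K Sb k ≤ C * (deg A Ta * d) := by
      calc ddSeq σ K Sb k = deg E Tb := rfl
        _ ≤ C * deg B Tb := s1
        _ ≤ C * deg B (Ta ∪ Tb) := Nat.mul_le_mul_left C s2
        _ = C * (deg B Ta * deg (fAdj B Ta) Tb) := by rw [s3]
        _ ≤ C * (deg A Ta * d) := by
            refine Nat.mul_le_mul_left C (Nat.mul_le_mul s4 ?_)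
            rw [← s6]
            exact s5
    have : ddSeq σ K Sa k = deg A Ta := rfl
    rw [this]
    calc ddSeq σ K Sb k ≤ C * (deg A Ta * d) := hchain
      _ = (C * d) * deg A Ta := by ring
  -- analytic conclusion
  set C0 := C * d with hC0
  have hC0pos : 0 < C0 := Nat.mul_pos hCpos hdpos
  have h1 : Tendsto (fun k : ℕ => ((C0 : ℝ)) ^ (1 / (k : ℝ))) atTop (nhds 1) := by
    have hc : ContinuousAt (fun t : ℝ => (C0 : ℝ) ^ t) 0 :=
      Real.continuousAt_const_rpow (by exact_mod_cast hC0pos.ne')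
    have h2 : Tendsto (fun k : ℕ => 1 / (k : ℝ)) atTop (nhds 0) :=
      tendsto_one_div_atTop_nhds_zero_nat
    have := hc.tendsto.comp h2
    simpa [Real.rpow_zero, Function.comp_def] using this
  have h3 : Tendsto (fun k : ℕ => (C0 : ℝ) ^ (1 / (k : ℝ))
      * (ddSeq σ K Sa k : ℝ) ^ (1 / (k : ℝ))) atTop (nhds (1 * Da)) := h1.mul hDa
  rw [one_mul] at h3
  refine le_of_tendsto_of_tendsto' hDb h3 ?_
  intro k
  have hnn : (0 : ℝ) ≤ 1 / (k : ℝ) := by positivity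
  have hcast : ((ddSeq σ K Sb k : ℕ) : ℝ) ≤ ((C0 * ddSeq σ K Sa k : ℕ) : ℝ) := by
    exact_mod_cast key k
  calc (ddSeq σ K Sb k : ℝ) ^ (1 / (k : ℝ))
      ≤ ((C0 * ddSeq σ K Sa k : ℕ) : ℝ) ^ (1 / (k : ℝ)) :=
        Real.rpow_le_rpow (by positivity) hcast hnn
    _ = (C0 : ℝ) ^ (1 / (k : ℝ)) * (ddSeq σ K Sa k : ℝ) ^ (1 / (k : ℝ)) := by
        rw [Nat.cast_mul, Real.mul_rpow (by positivity) (by positivity)]
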